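/- arXiv:1608.00392 — 4 statements merged into one kernel-verified Lean document; each statement's English description precedes it below -/
import Mathlib

section
/- Let R be a (possibly noncommutative) unital ring, let f : A → R be a ring homomorphism, and regard R and its quotients by left ideals as left A-modules via f and left multiplication. If x, y ∈ R are such that R/Rx and R/Ry are finitely generated as A-modules, then R/R(xy) is finitely generated as an A-module. -/
/-- Let `R` be a (possibly noncommutative) unital ring, `f : A → R` a ring homomorphism,
and regard `R` and its quotients by left ideals as left `A`-modules via `f` and left
multiplication.  If `x, y ∈ R` are such that `R/Rx` and `R/Ry` are finitely generated as
`A`-modules, then `R/R(xy)` is finitely generated as an `A`-module. -/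
theorem span_mul_quotient_finite_of_finite {A R : Type*} [Ring A] [Ring R]
    (f : A →+* R) (x y : R) :
    letI : Module A R := Module.compHom R f
    Module.Finite A (R ⧸ Submodule.span A {z : R | ∃ r : R, z = r * x}) →
    Module.Finite A (R ⧸ Submodule.span A {z : R | ∃ r : R, z = r * y}) →
    Module.Finite A (R ⧸ Submodule.span A {z : R | ∃ r : R, z = r * (x * y)}) := by
  letI : Module A R := Module.compHom R f
  intro h1 h2
  set Sx := Submodule.span A {z : R | ∃ r : R, z = r * x} with hSx
  set Sy := Submodule.span A {z : R | ∃ r : R, z = r * y} with hSy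
  set Sxy := Submodule.span A {z : R | ∃ r : R, z = r * (x * y)} with hSxy
  have smul_def : ∀ (a : A) (r : R), a • r = f a * r := fun _ _ => rfl
  have hle : Sxy ≤ Sy := Submodule.span_le.mpr (by
    rintro z ⟨r, rfl⟩
    exact Submodule.subset_span ⟨r * x, by rw [mul_assoc]⟩)
  -- the A-linear map r ↦ r * y
  let μ : R →ₗ[A] R :=
    { toFun := fun r => r * y
      map_add' := fun a b => add_mul a b y
      map_smul' := fun a r => by simp [smul_def, mul_assoc] }
  let g : R →ₗ[A] R ⧸ Sxy := Sxy.mkQ.comp μ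
  have hker : Sx ≤ LinearMap.ker g := Submodule.span_le.mpr (by
    rintro z ⟨r, rfl⟩
    simp only [SetLike.mem_coe, LinearMap.mem_ker, g, μ, LinearMap.comp_apply,
      LinearMap.coe_mk, AddHom.coe_mk, Submodule.mkQ_apply, Submodule.Quotient.mk_eq_zero]
    exact Submodule.subset_span ⟨r, mul_assoc r x y⟩)
  let g' : (R ⧸ Sx) →ₗ[A] R ⧸ Sxy := Sx.liftQ g hker
  have hrangeμ : LinearMap.range μ = Sy := by
    apply le_antisymm
    · rintro z ⟨r, rfl⟩
      exact Submodule.subset_span ⟨r, rfl⟩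
    · rw [hSy]
      apply Submodule.span_le.mpr
      rintro z ⟨r, rfl⟩
      exact ⟨r, rfl⟩
  have hrange : LinearMap.range g' = Sy.map Sxy.mkQ := by
    rw [Submodule.range_liftQ]
    show LinearMap.range (Sxy.mkQ.comp μ) = _
    rw [LinearMap.range_comp, hrangeμ]
  have hSfg : (Sy.map Sxy.mkQ).FG := by
    rw [← hrange, LinearMap.range_eq_map]
    exact (Module.finite_def.mp h1).map g'
  have hquot : Module.Finite A ((R ⧸ Sxy) ⧸ Sy.map Sxy.mkQ) :=
    Module.Finite.equiv (Submodule.quotientQuotientEquivQuotient Sxy Sy hle).symm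
  refine Module.finite_def.mpr ?_
  refine Submodule.fg_of_fg_map_of_fg_inf_ker (Sy.map Sxy.mkQ).mkQ ?_ ?_
  · rw [Submodule.map_top, Submodule.range_mkQ]
    exact Module.finite_def.mp hquot
  · rw [Submodule.ker_mkQ, top_inf_eq]
    exact hSfg
end

section
/- Let p be a prime and let A be a commutative ring in which every integer coprime to p is invertible (for instance, a Z_p-algebra). Let I be an ideal of A satisfying I^p ⊆ p·I. Then I^n ⊆ n·I for every integer n ≥ 1. -/
/-- Let `p` be a prime and `A` a commutative ring in which every integer coprime to `p` is
invertible.  If an ideal `I` of `A` satisfies `I ^ p ⊆ p·I`, then `I ^ n ⊆ n·I` for every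
integer `n ≥ 1`. -/
theorem pow_le_smul_of_pow_prime_le (p : ℕ) (hp : p.Prime) (A : Type*) [CommRing A]
    (hunit : ∀ m : ℤ, IsCoprime m (p : ℤ) → IsUnit ((m : ℤ) : A))
    (I : Ideal A) (hI : I ^ p ≤ Ideal.span {(p : A)} * I) :
    ∀ n : ℕ, 1 ≤ n → I ^ n ≤ Ideal.span {(n : A)} * I := by
  intro n
  induction n using Nat.strong_induction_on with
  | _ n ih =>
    intro hn
    by_cases hdvd : p ∣ n
    · obtain ⟨k, rfl⟩ := hdvd
      have hk : 1 ≤ k := by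
        rcases Nat.eq_zero_or_pos k with h | h
        · simp [h] at hn
        · exact h
      have hklt : k < p * k := by
        have : 1 < p := hp.one_lt
        calc k = 1 * k := (one_mul k).symm
          _ < p * k := (Nat.mul_lt_mul_right hk).mpr this
      calc I ^ (p * k) = (I ^ p) ^ k := by rw [← pow_mul]
        _ ≤ (Ideal.span {(p : A)} * I) ^ k := Ideal.pow_right_mono hI k
        _ = Ideal.span {(p : A)} ^ k * I ^ k := mul_pow _ _ _
        _ ≤ Ideal.span {(p : A)} ^ k * (Ideal.span {(k : A)} * I) :=
            Ideal.mul_mono_right (ih k hklt hk)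
        _ = Ideal.span {((p : A)) ^ k} * Ideal.span {(k : A)} * I := by
            rw [Ideal.span_singleton_pow, mul_assoc]
        _ = Ideal.span {((p : A)) ^ k * (k : A)} * I := by
            rw [Ideal.span_singleton_mul_span_singleton]
        _ ≤ Ideal.span {((p * k : ℕ) : A)} * I := by
            apply Ideal.mul_mono_left
            apply Ideal.span_singleton_le_span_singleton.mpr
            push_cast
            exact ⟨(p : A) ^ (k - 1), by
              rw [← pow_sub_mul_pow (p:A) hk]; ring⟩
    · have hcop : Nat.Coprime n p := Nat.coprime_comm.mp ((hp.coprime_iff_not_dvd).mpr hdvd)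
      have hu : IsUnit ((n : ℤ) : A) := hunit n (Nat.isCoprime_iff_coprime.mpr hcop)
      have : Ideal.span {(n : A)} = ⊤ := Ideal.span_singleton_eq_top.mpr (by exact_mod_cast hu)
      rw [this, Ideal.top_mul]
      exact Ideal.pow_le_self (by omega)
end

section
/- Let p be a prime, G a finite p-group of order p^r, and R any commutative ring. Let I_G be the augmentation ideal of the group algebra R[G], i.e., the kernel of the R-algebra map R[G] → R sending every g ∈ G to 1. Then I_G^{p^r} ⊆ p·R[G]. -/
open Finsupp MonoidAlgebra

section Aux2

variable {R : Type*} [CommRing R] {G : Type*} [Group G]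

private lemma single_central'' (z : G) (hz : ∀ g : G, g * z = z * g) (a : MonoidAlgebra R G) :
    MonoidAlgebra.single z (1 : R) * a = a * MonoidAlgebra.single z 1 := by
  induction a using MonoidAlgebra.induction_linear with
  | zero => simp
  | add f g hf hg => rw [mul_add, add_mul, hf, hg]
  | single g c =>
      rw [MonoidAlgebra.single_mul_single, MonoidAlgebra.single_mul_single, one_mul, mul_one, hz]

private lemma delta_commute'' (z : G) (hz : ∀ g : G, g * z = z * g) (a : MonoidAlgebra R G) :
    Commute (MonoidAlgebra.single z (1 : R) - 1) a := by
  have h : (MonoidAlgebra.single z (1:R) - 1) * a = a * (MonoidAlgebra.single z 1 - 1) := by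
    rw [sub_mul, mul_sub, one_mul, mul_one, single_central'' z hz]
  exact h

private lemma delta_geom'' (z : G) (m : ℕ) :
    (MonoidAlgebra.single z (1 : R) - 1) *
      (∑ j ∈ Finset.range m, MonoidAlgebra.single (z ^ j) (1 : R)) =
      MonoidAlgebra.single (z ^ m) 1 - 1 := by
  induction m with
  | zero => simp [MonoidAlgebra.one_def]
  | succ m ih =>
      rw [Finset.sum_range_succ, mul_add, ih, sub_mul, one_mul, MonoidAlgebra.single_mul_single,
        one_mul, ← pow_succ']
      abel

private lemma ker_delta'' {Q : Type*} [Group Q] (π : G →* Q) (z : G) {p : ℕ} (hppos : 0 < p)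
    (hzc : ∀ g : G, g * z = z * g) (hz1 : z ^ p = 1)
    (hker : ∀ g : G, π g = 1 → g ∈ Subgroup.zpowers z)
    (s : Q → G) (hs : ∀ q, π (s q) = q)
    (f : MonoidAlgebra R G) (hf : MonoidAlgebra.mapDomain π f = 0) :
    ∃ d, f = (MonoidAlgebra.single z (1 : R) - 1) * d := by
  have hfin : IsOfFinOrder z := isOfFinOrder_iff_pow_eq_one.mpr ⟨p, hppos, hz1⟩
  have hm : ∀ g : G, ∃ m : ℕ, s (π g) * z ^ m = g := by
    intro g
    have h1 : π ((s (π g))⁻¹ * g) = 1 := by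
      rw [map_mul, map_inv, hs, inv_mul_cancel]
    have h2 := hker _ h1
    rw [← hfin.mem_powers_iff_mem_zpowers] at h2
    obtain ⟨m, hm⟩ := h2
    exact ⟨m, by rw [show z ^ m = (s (π g))⁻¹ * g from hm, mul_inv_cancel_left]⟩
  choose m hmg using hm
  set δ : MonoidAlgebra R G := MonoidAlgebra.single z (1 : R) - 1 with hδ
  refine ⟨f.coeff.sum (fun g c => MonoidAlgebra.single (s (π g)) c *
      ∑ j ∈ Finset.range (m g), MonoidAlgebra.single (z ^ j) (1 : R)), ?_⟩
  have key : ∀ (g : G) (c : R),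
      δ * (MonoidAlgebra.single (s (π g)) c *
        ∑ j ∈ Finset.range (m g), MonoidAlgebra.single (z ^ j) (1 : R)) =
      MonoidAlgebra.single g c - MonoidAlgebra.single (s (π g)) c := by
    intro g c
    rw [← mul_assoc, (delta_commute'' z hzc (MonoidAlgebra.single (s (π g)) c)).eq, mul_assoc,
      delta_geom'' z (m g), mul_sub, mul_one, MonoidAlgebra.single_mul_single, mul_one, hmg g]
  rw [Finsupp.mul_sum]
  have : (f.coeff.sum fun g c => δ * (MonoidAlgebra.single (s (π g)) c *
      ∑ j ∈ Finset.range (m g), MonoidAlgebra.single (z ^ j) (1 : R))) =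
      f.coeff.sum fun g c => MonoidAlgebra.single g c - MonoidAlgebra.single (s (π g)) c := by
    apply Finsupp.sum_congr
    intro g _
    exact key g (f.coeff g)
  rw [this]
  have hF2 : (f.coeff.sum fun g c => MonoidAlgebra.single (s (π g)) c) = (0 : MonoidAlgebra R G) := by
    have h1 : (f.coeff.sum fun g c => MonoidAlgebra.single (s (π g)) c)
        = MonoidAlgebra.mapDomain (s ∘ ⇑π) f := by
      conv_rhs => rw [← MonoidAlgebra.sum_coeff_single f]
      simp only [MonoidAlgebra.mapDomain_sum, MonoidAlgebra.mapDomain_single, Function.comp_apply]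
    have h2 : MonoidAlgebra.mapDomain (s ∘ ⇑π) f
        = MonoidAlgebra.mapDomain s (MonoidAlgebra.mapDomain π f) :=
      congrArg MonoidAlgebra.ofCoeff Finsupp.mapDomain_comp
    rw [h1, h2, hf, MonoidAlgebra.mapDomain_zero]
  have hsplit : (f.coeff.sum fun g c => MonoidAlgebra.single g c - MonoidAlgebra.single (s (π g)) c)
      = (f.coeff.sum fun g c => MonoidAlgebra.single g c)
        - (f.coeff.sum fun g c => MonoidAlgebra.single (s (π g)) c) := by
    simp only [Finsupp.sum, Finset.sum_sub_distrib]
  rw [hsplit, hF2, MonoidAlgebra.sum_coeff_single, sub_zero]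

private lemma mul_helper'' {A : Type*} [Ring A] (P δ c d c' d' : A) (k : ℕ)
    (hP : ∀ a, Commute P a) (hδ : ∀ a, Commute δ a) :
    (P * c + δ * d) * (P * c' + δ ^ k * d') =
      P * (c * (P * c' + δ ^ k * d') + δ * (d * c')) + δ ^ (k + 1) * (d * d') := by
  have h1 : d * (δ ^ k * d') = δ ^ k * (d * d') := (((hδ d).pow_left k).left_comm d').symm
  have h2 : d * (P * c') = P * (d * c') := (hP d).symm.left_comm c'
  have h3 : ∀ x : A, δ * (P * x) = P * (δ * x) := fun x => (hP δ).symm.left_comm x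
  have h4 : ∀ x : A, δ * (δ ^ k * x) = δ ^ (k + 1) * x := by
    intro x; rw [← mul_assoc, ← pow_succ']
  rw [add_mul, mul_assoc, mul_assoc, mul_add d, h1, h2, mul_add δ, h3, h4, mul_add P]
  abel

private lemma delta_pow_prime'' {p : ℕ} (hp : p.Prime) (z : G) (hz1 : z ^ p = 1) :
    ∃ e : MonoidAlgebra R G,
      (MonoidAlgebra.single z (1 : R) - 1) ^ p = (p : MonoidAlgebra R G) * e := by
  have hc : Commute (MonoidAlgebra.single z (1 : R)) (-1 : MonoidAlgebra R G) :=
    (Commute.one_right _).neg_right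
  obtain ⟨s, hs⟩ : ∃ r, (MonoidAlgebra.single z (1 : R) + -1) ^ p =
      MonoidAlgebra.single z (1 : R) ^ p + (-1) ^ p + (p : MonoidAlgebra R G) * r :=
    let ⟨r, h⟩ := hc.exists_add_pow_prime_eq hp
    ⟨MonoidAlgebra.single z (1 : R) * (-1 * r), by rw [h, mul_assoc, mul_assoc]⟩
  have hu : (MonoidAlgebra.single z (1 : R)) ^ p = 1 := by
    rw [MonoidAlgebra.single_pow, hz1, one_pow, MonoidAlgebra.one_def]
  rw [sub_eq_add_neg]
  rcases hp.eq_two_or_odd' with h2 | hodd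
  · subst h2
    refine ⟨s + 1, ?_⟩
    rw [hs, hu, neg_one_sq]
    have h2' : ((2 : ℕ) : MonoidAlgebra R G) = 1 + 1 := by norm_num
    rw [mul_add, mul_one, h2']
    abel
  · refine ⟨s, ?_⟩
    rw [hs, hu, hodd.neg_one_pow]
    abel

end Aux2

universe u

private theorem key_aug (p : ℕ) (hp : p.Prime) {R : Type*} [CommRing R] :
    ∀ (r : ℕ) (G : Type u) [Group G] [Finite G], Nat.card G = p ^ r →
      ∀ L : List (MonoidAlgebra R G), L.length = p ^ r →
        (∀ a ∈ L, MonoidAlgebra.lift R R G 1 a = 0) →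
        ∃ c, L.prod = (p : MonoidAlgebra R G) * c := by
  intro r
  induction r with
  | zero =>
    intro G _ _ hcard L hlen haug
    haveI hsub : Subsingleton G := by
      rw [pow_zero] at hcard
      exact (Nat.card_eq_one_iff_unique.mp hcard).1
    rw [pow_zero] at hlen
    obtain ⟨a, rfl⟩ := List.length_eq_one_iff.mp hlen
    have ha := haug a (List.mem_singleton_self a)
    have h1 : a = MonoidAlgebra.single (1 : G) (a.coeff 1) := by
      ext g
      rw [Subsingleton.elim g (1 : G)]
      simp
    have h2 : MonoidAlgebra.lift R R G 1 a = a.coeff 1 := by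
      conv_lhs => rw [h1]
      simp
    have haz : a = 0 := by
      rw [h1, ← h2, ha]; simp
    exact ⟨0, by rw [List.prod_singleton, haz, mul_zero]⟩
  | succ r IH =>
    intro G _ _ hcard L hlen haug
    haveI := Fact.mk hp
    have hpg : IsPGroup p G := IsPGroup.of_card hcard
    haveI hnt : Nontrivial G := by
      have h1 : 1 < Nat.card G := by
        rw [hcard]; exact Nat.one_lt_pow (Nat.succ_ne_zero r) hp.one_lt
      exact Finite.one_lt_card_iff_nontrivial.mp h1
    haveI hcent : Nontrivial (Subgroup.center G) := hpg.center_nontrivial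
    have hdvd : p ∣ Nat.card (Subgroup.center G) := by
      have h1 : Nat.card (Subgroup.center G) ∣ p ^ (r + 1) :=
        hcard ▸ Subgroup.card_subgroup_dvd_card _
      obtain ⟨k, _, he⟩ := (Nat.dvd_prime_pow hp).mp h1
      rcases Nat.eq_zero_or_pos k with h0 | hpos
      · exfalso
        rw [h0, pow_zero] at he
        exact (Finite.one_lt_card_iff_nontrivial.mpr hcent).ne' he
      · rw [he]; exact dvd_pow_self p hpos.ne'
    obtain ⟨ζ, hζ⟩ := exists_prime_orderOf_dvd_card' (G := Subgroup.center G) p hdvd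
    set z : G := (ζ : G) with hzdef
    have hzc : ∀ g : G, g * z = z * g := fun g => Subgroup.mem_center_iff.mp ζ.2 g
    have hordz : orderOf z = p := by
      rw [hzdef, Subgroup.orderOf_coe]; exact hζ
    have hz1 : z ^ p = 1 := by rw [← hordz]; exact pow_orderOf_eq_one z
    have hppos : 0 < p := hp.pos
    set N := Subgroup.zpowers z with hNdef
    have hNle : N ≤ Subgroup.center G := Subgroup.zpowers_le.mpr ζ.2
    haveI hNnormal : N.Normal := by
      constructor
      intro n hn g
      have hcomm := Subgroup.mem_center_iff.mp (hNle hn) g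
      have hconj : g * n * g⁻¹ = n := by rw [hcomm, mul_inv_cancel_right]
      rw [hconj]; exact hn
    haveI : Finite (G ⧸ N) := Quotient.finite _
    have hcardQ : Nat.card (G ⧸ N) = p ^ r := by
      have h1 : N.index * Nat.card N = Nat.card G := Subgroup.index_mul_card N
      have h2 : Nat.card N = p := by rw [hNdef, Nat.card_zpowers, hordz]
      have h3 : N.index = p ^ r := by
        rw [h2, hcard, pow_succ] at h1
        exact Nat.eq_of_mul_eq_mul_right hppos h1
      rw [← h3]; rfl
    set π := QuotientGroup.mk' N with hπdef
    set Φ := MonoidAlgebra.mapDomainRingHom R π with hΦdef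
    have hΦapp : ∀ a : MonoidAlgebra R G, Φ a = MonoidAlgebra.mapDomain ⇑π a := fun a => rfl
    have haugΦ : ∀ a : MonoidAlgebra R G,
        MonoidAlgebra.lift R R (G ⧸ N) 1 (Φ a) = MonoidAlgebra.lift R R G 1 a := by
      intro a
      induction a using MonoidAlgebra.induction_linear with
      | zero => simp
      | add f g hf hg => rw [map_add, map_add, map_add, hf, hg]
      | single g c =>
        rw [hΦapp, MonoidAlgebra.mapDomain_single]
        simp
    have hs : ∀ q : G ⧸ N, π (Quotient.out q) = q := fun q => QuotientGroup.out_eq' q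
    have hsurj : ∀ y : MonoidAlgebra R (G ⧸ N), ∃ a, Φ a = y := by
      intro y
      induction y using MonoidAlgebra.induction_linear with
      | zero => exact ⟨0, map_zero Φ⟩
      | add f g hf hg =>
        obtain ⟨a, ha⟩ := hf; obtain ⟨b, hb⟩ := hg
        exact ⟨a + b, by rw [map_add, ha, hb]⟩
      | single q c =>
        refine ⟨MonoidAlgebra.single (Quotient.out q) c, ?_⟩
        rw [hΦapp, MonoidAlgebra.mapDomain_single, hs]
    have hker : ∀ g : G, π g = 1 → g ∈ Subgroup.zpowers z := by
      intro g hg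
      have h1 : g ∈ (QuotientGroup.mk' N).ker := hg
      rwa [QuotientGroup.ker_mk'] at h1
    have hblock : ∀ M : List (MonoidAlgebra R G), M.length = p ^ r →
        (∀ a ∈ M, MonoidAlgebra.lift R R G 1 a = 0) →
        ∃ c d, M.prod = (p : MonoidAlgebra R G) * c +
          (MonoidAlgebra.single z (1 : R) - 1) * d := by
      intro M hMlen hMaug
      have hmap : ∀ b ∈ M.map Φ, MonoidAlgebra.lift R R (G ⧸ N) 1 b = 0 := by
        intro b hb
        obtain ⟨a, ha, rfl⟩ := List.mem_map.mp hb
        rw [haugΦ]; exact hMaug a ha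
      obtain ⟨c', hc'⟩ := IH (G ⧸ N) hcardQ (M.map Φ) (by rw [List.length_map, hMlen]) hmap
      obtain ⟨c, hc⟩ := hsurj c'
      have hker0 : Φ (M.prod - (p : MonoidAlgebra R G) * c) = 0 := by
        rw [map_sub, map_list_prod, hc', map_mul, map_natCast, hc, sub_self]
      obtain ⟨d, hd⟩ := ker_delta'' π z hppos hzc hz1 hker (fun q => Quotient.out q) hs
        (M.prod - (p : MonoidAlgebra R G) * c) (by rw [← hΦapp]; exact hker0)
      refine ⟨c, d, ?_⟩
      rw [← hd]; abel
    have hδcom := delta_commute'' z hzc (R := R)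
    have hPcom : ∀ a : MonoidAlgebra R G, Commute ((p : ℕ) : MonoidAlgebra R G) a :=
      fun a => Nat.cast_commute p a
    have hchunk : ∀ (k : ℕ) (M : List (MonoidAlgebra R G)), M.length = p ^ r * k →
        (∀ a ∈ M, MonoidAlgebra.lift R R G 1 a = 0) →
        ∃ c d, M.prod = (p : MonoidAlgebra R G) * c +
          (MonoidAlgebra.single z (1 : R) - 1) ^ k * d := by
      intro k
      induction k with
      | zero =>
        intro M hMlen _
        have hnil : M = [] := List.length_eq_zero_iff.mp (by rw [hMlen, Nat.mul_zero])
        subst hnil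
        exact ⟨0, 1, by simp⟩
      | succ k ihk =>
        intro M hMlen hMaug
        have hge : p ^ r ≤ M.length := by
          rw [hMlen, Nat.mul_succ]; exact Nat.le_add_left _ _
        have htake : (M.take (p ^ r)).length = p ^ r := by
          rw [List.length_take]; exact min_eq_left hge
        have hdrop : (M.drop (p ^ r)).length = p ^ r * k := by
          rw [List.length_drop, hMlen, Nat.mul_succ]; omega
        obtain ⟨c, d, hcd⟩ := hblock (M.take (p ^ r)) htake
          (fun a ha => hMaug a (List.take_subset _ _ ha))
        obtain ⟨c', d', hcd'⟩ := ihk (M.drop (p ^ r)) hdrop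
          (fun a ha => hMaug a (List.drop_subset _ _ ha))
        have hprod : M.prod = (M.take (p ^ r)).prod * (M.drop (p ^ r)).prod := by
          conv_lhs => rw [← List.take_append_drop (p ^ r) M]
          rw [List.prod_append]
        refine ⟨c * ((p : MonoidAlgebra R G) * c' +
          (MonoidAlgebra.single z (1 : R) - 1) ^ k * d') +
          (MonoidAlgebra.single z (1 : R) - 1) * (d * c'), d * d', ?_⟩
        rw [hprod, hcd, hcd']
        exact mul_helper'' _ _ c d c' d' k hPcom hδcom
    obtain ⟨c, d, hcd⟩ := hchunk p L (by rw [hlen, pow_succ]) haug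
    obtain ⟨e, he⟩ := delta_pow_prime'' hp z hz1 (R := R)
    refine ⟨c + e * d, ?_⟩
    rw [hcd, he, mul_add, mul_assoc]

/-- Let `p` be a prime, `G` a finite `p`-group of order `p ^ r`, and `R` any commutative
ring.  Let `I_G` be the augmentation ideal of the group algebra `R[G]`, i.e. the kernel of
the `R`-algebra map `R[G] → R` sending every `g ∈ G` to `1`.  Then
`I_G ^ (p ^ r) ⊆ p·R[G]`: every product of `p ^ r` elements of `I_G` lies in `p·R[G]`. -/
theorem augmentationIdeal_pow_card_le (p r : ℕ) (hp : p.Prime)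
    (G : Type*) [Group G] [Fintype G] (hG : Fintype.card G = p ^ r)
    (R : Type*) [CommRing R]
    (x : Fin (p ^ r) → MonoidAlgebra R G)
    (hx : ∀ i, x i ∈ RingHom.ker
      ((MonoidAlgebra.lift R R G 1 : MonoidAlgebra R G →ₐ[R] R) : MonoidAlgebra R G →+* R)) :
    ∃ z : MonoidAlgebra R G, (List.ofFn x).prod = (p : MonoidAlgebra R G) * z := by
  have hcard : Nat.card G = p ^ r := by rw [Nat.card_eq_fintype_card, hG]
  refine key_aug p hp r G hcard (List.ofFn x) (by rw [List.length_ofFn]) ?_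
  intro a ha
  rw [List.mem_ofFn] at ha
  obtain ⟨i, rfl⟩ := ha
  simpa using RingHom.mem_ker.mp (hx i)
end

section
/- Let R be a commutative ring, a ⊆ R an ideal, p a prime, and G a finite p-group of order p^r. Let I_G be the augmentation ideal of the group algebra R[G], i.e., the kernel of the R-algebra map R[G] → R sending every g ∈ G to 1. If x ∈ a·R[G] + I_G, then x^{p^r} lies in the two-sided ideal of R[G] generated by p and a. -/
open MonoidAlgebra Subgroup

section Aux

variable {A : Type*} [Ring A]

/-- A left-ideal span of central elements is closed under right multiplication. -/
lemma span_central_mul_right {S : Set A}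
    (hS : ∀ s ∈ S, ∀ t : A, s * t = t * s) {u : A} (hu : u ∈ Ideal.span S) (c : A) :
    u * c ∈ Ideal.span S := by
  refine Submodule.span_induction (p := fun u _ => u * c ∈ Ideal.span S) ?_ ?_ ?_ ?_ hu
  · intro s hs
    rw [hS s hs c]
    exact Ideal.mul_mem_left _ _ (Ideal.subset_span hs)
  · simp
  · intro a b _ _ ha hb; rw [add_mul]; exact add_mem ha hb
  · intro a b _ hb; rw [smul_eq_mul, mul_assoc]; exact Ideal.mul_mem_left _ _ hb

lemma pow_sub_pow_mem (J : Ideal A)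
    (hJ : ∀ u ∈ J, ∀ c : A, u * c ∈ J) {y w : A} (hy : y ∈ J) (n : ℕ) :
    (y + w) ^ n - w ^ n ∈ J := by
  induction n with
  | zero => simp
  | succ n ih =>
      have hid : (y + w) ^ (n + 1) - w ^ (n + 1)
          = ((y + w) ^ n - w ^ n) * (y + w) + w ^ n * y := by
        rw [pow_succ, pow_succ]; noncomm_ring
      rw [hid]
      exact add_mem (hJ _ ih _) (Ideal.mul_mem_left _ _ hy)

end Aux

section Ker

variable {R : Type*} [CommRing R] {G : Type*} [Group G] [Fintype G]

/-- The kernel of the map `R[G] → R[G/⟨z⟩]` is contained in the left ideal generated by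
`z - 1`. -/
lemma ker_mapDomain_le_span (z : G) (y : MonoidAlgebra R G)
    (hy : MonoidAlgebra.mapDomain (QuotientGroup.mk (s := zpowers z)) y = 0) :
    y ∈ Ideal.span {(MonoidAlgebra.single z (1 : R)) - 1} := by
  classical
  set K := Ideal.span {(MonoidAlgebra.single z (1 : R)) - 1} with hK
  set σ : G → G := fun g => ((QuotientGroup.mk g : G ⧸ zpowers z)).out with hσ
  set ψ : MonoidAlgebra R G →+ MonoidAlgebra R G :=
    AddMonoidHom.mk' (MonoidAlgebra.mapDomain σ) (MonoidAlgebra.mapDomain_add σ) with hψdef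
  have key : ∀ (g : G) (b : R),
      (MonoidAlgebra.single g b : MonoidAlgebra R G) - MonoidAlgebra.single (σ g) b ∈ K := by
    intro g b
    have hmk : (QuotientGroup.mk g : G ⧸ zpowers z) = QuotientGroup.mk (σ g) :=
      (QuotientGroup.out_eq' _).symm
    have hmem : g⁻¹ * σ g ∈ zpowers z := QuotientGroup.eq.mp hmk
    obtain ⟨k, hk⟩ := mem_powers_iff_mem_zpowers.mpr hmem
    have hk' : z ^ k = g⁻¹ * σ g := hk
    have htg : σ g = g * z ^ k := by rw [hk']; group
    have h1 : (MonoidAlgebra.single (σ g) b : MonoidAlgebra R G)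
        = MonoidAlgebra.single g b * (MonoidAlgebra.single z (1 : R)) ^ k := by
      rw [MonoidAlgebra.single_pow, one_pow, MonoidAlgebra.single_mul_single, mul_one, htg]
    have h2 : (MonoidAlgebra.single g b : MonoidAlgebra R G) - MonoidAlgebra.single (σ g) b
        = -(MonoidAlgebra.single g b * ((Finset.range k).sum
            (fun i => (MonoidAlgebra.single z (1 : R)) ^ i))
            * ((MonoidAlgebra.single z (1 : R)) - 1)) := by
      rw [mul_assoc, geom_sum_mul, h1]
      noncomm_ring
    rw [h2]
    exact neg_mem (Ideal.mul_mem_left _ _ (Ideal.subset_span rfl))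
  have hsing : ∀ (a : G) (b : R),
      ψ (MonoidAlgebra.single a b) = MonoidAlgebra.single (σ a) b := by
    intro a b
    exact MonoidAlgebra.mapDomain_single
  set Φ : MonoidAlgebra R G →+ MonoidAlgebra R G := AddMonoidHom.id _ - ψ with hΦdef
  have hΦsingle : ∀ (a : G) (b : R), Φ (MonoidAlgebra.single a b) ∈ K := by
    intro a b
    have : Φ (MonoidAlgebra.single a b)
        = MonoidAlgebra.single a b - MonoidAlgebra.single (σ a) b := by
      rw [hΦdef, AddMonoidHom.sub_apply, AddMonoidHom.id_apply, hsing]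
    rw [this]; exact key a b
  have hA : ∀ v : MonoidAlgebra R G, Φ v ∈ K := by
    intro v
    induction v using MonoidAlgebra.induction with
    | zero => simpa using (zero_mem K)
    | single_add a b f _ _ ih =>
        rw [map_add]
        exact add_mem (hΦsingle a b) ih
  have hψ : ψ y = 0 := by
    have hz : MonoidAlgebra.mapDomain σ y = 0 := by
      have hcomp : σ = (fun q : G ⧸ zpowers z => q.out) ∘
          (QuotientGroup.mk : G → G ⧸ zpowers z) := rfl
      have hy' : Finsupp.mapDomain (QuotientGroup.mk : G → G ⧸ zpowers z) y.coeff = 0 :=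
        congrArg MonoidAlgebra.coeff hy
      apply MonoidAlgebra.coeff_injective
      change Finsupp.mapDomain σ y.coeff = 0
      rw [hcomp, Finsupp.mapDomain_comp, hy', Finsupp.mapDomain_zero]
    exact hz
  have hAy := hA y
  have : Φ y = y := by
    rw [hΦdef, AddMonoidHom.sub_apply, AddMonoidHom.id_apply, hψ, sub_zero]
  rwa [this] at hAy

end Ker

section Main

universe u

variable {R : Type*} [CommRing R]

lemma single_central_commute {G : Type u} [Group G] {z : G} (hz : z ∈ Subgroup.center G)
    (c : MonoidAlgebra R G) : Commute (MonoidAlgebra.single z (1 : R)) c := by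
  induction c using MonoidAlgebra.induction with
  | zero => exact Commute.zero_right _
  | single_add a b f _ _ ih =>
      have hs : Commute (MonoidAlgebra.single z (1 : R)) (MonoidAlgebra.single a b) := by
        unfold Commute SemiconjBy
        simp [MonoidAlgebra.single_mul_single, Subgroup.mem_center_iff.mp hz a]
      exact hs.add_right ih

lemma sub_one_pow_prime_mem {G : Type u} [Group G] {p : ℕ} (hp : p.Prime) {z : G}
    (hord : orderOf z = p) :
    (MonoidAlgebra.single z (1 : R) - 1) ^ p
      ∈ Ideal.span {((p : ℕ) : MonoidAlgebra R G)} := by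
  set ζ : MonoidAlgebra R G := MonoidAlgebra.single z (1 : R) with hζ
  have hζp : ζ ^ p = 1 := by
    rw [hζ, MonoidAlgebra.single_pow, one_pow, ← hord, pow_orderOf_eq_one,
      MonoidAlgebra.one_def]
  obtain ⟨c1, hc1⟩ : ∃ c1, (ζ + -1) ^ p = ζ ^ p + (-1) ^ p + (p : MonoidAlgebra R G) * c1 := by
    obtain ⟨c, hc⟩ := (Commute.neg_one_right ζ).exists_add_pow_prime_eq hp
    exact ⟨ζ * -1 * c, by rw [hc]; simp only [mul_assoc]⟩
  obtain ⟨c2, hc2⟩ : ∃ c2, ((1 : MonoidAlgebra R G) + -1) ^ p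
      = 1 ^ p + (-1) ^ p + (p : MonoidAlgebra R G) * c2 := by
    obtain ⟨c, hc⟩ := (Commute.neg_one_right (1 : MonoidAlgebra R G)).exists_add_pow_prime_eq hp
    exact ⟨1 * -1 * c, by rw [hc]; simp only [mul_assoc]⟩
  have h0 : ((1 : MonoidAlgebra R G) + (-1)) ^ p = 0 := by
    rw [add_neg_cancel]
    exact zero_pow hp.ne_zero
  rw [h0, one_pow] at hc2
  have e1 : (1 : MonoidAlgebra R G) + (-1) ^ p = -(((p : ℕ) : MonoidAlgebra R G) * c2) :=
    eq_neg_of_add_eq_zero_left hc2.symm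
  have hfinal : (ζ - 1) ^ p = (c1 - c2) * ((p : ℕ) : MonoidAlgebra R G) := by
    rw [sub_eq_add_neg, hc1, hζp, e1, sub_mul, (Nat.cast_commute p c1).eq,
      (Nat.cast_commute p c2).eq]
    abel
  rw [hfinal]
  exact Submodule.mem_span_singleton.mpr ⟨c1 - c2, by rw [smul_eq_mul]⟩

lemma aug_pow (p : ℕ) (hp : p.Prime) :
    ∀ (r : ℕ) (G : Type u) [Group G] [Fintype G],
      Fintype.card G = p ^ r →
      ∀ x : MonoidAlgebra R G, (MonoidAlgebra.lift R R G 1) x = 0 →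
      x ^ p ^ r ∈ Ideal.span {((p : ℕ) : MonoidAlgebra R G)} := by
  intro r
  induction r with
  | zero =>
      intro G _ _ hG x hx
      have hsub : Subsingleton G := by
        rw [← Fintype.card_le_one_iff_subsingleton, hG]; simp
      have hx1 : x = MonoidAlgebra.single (1 : G) (x.coeff 1) := by
        ext g
        rw [Subsingleton.elim g (1 : G)]
        simp
      have hx0 : (MonoidAlgebra.lift R R G 1) x = x.coeff 1 := by
        conv_lhs => rw [hx1]
        rw [MonoidAlgebra.lift_single]
        simp
      rw [hx0] at hx
      have hx2 : x = 0 := by rw [hx1, hx, MonoidAlgebra.single_zero]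
      rw [pow_zero, pow_one, hx2]
      exact zero_mem _
  | succ r ih =>
      intro G _ _ hG x hx
      classical
      haveI hpfact : Fact p.Prime := ⟨hp⟩
      obtain ⟨k, hk0, hkcard⟩ := IsPGroup.card_center_eq_prime_pow (p := p) (G := G) (n := r + 1)
        (by rw [Nat.card_eq_fintype_card, hG]) (Nat.succ_pos r)
      have hdvd : p ∣ Nat.card (Subgroup.center G) := by
        rw [hkcard]; exact dvd_pow_self p hk0.ne'
      obtain ⟨zc, hzc⟩ := exists_prime_orderOf_dvd_card' (G := Subgroup.center G) p hdvd
      set z : G := (zc : G) with hzdef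
      have hzcen : z ∈ Subgroup.center G := zc.2
      have hord : orderOf z = p := by
        rw [hzdef, orderOf_coe, hzc]
      set N := Subgroup.zpowers z with hNdef
      haveI hN : N.Normal := by
        constructor
        intro n hn g
        have hninc : n ∈ Subgroup.center G := (Subgroup.zpowers_le.mpr hzcen) hn
        have hfix : g * n * g⁻¹ = n := by
          rw [Subgroup.mem_center_iff.mp hninc g, mul_inv_cancel_right]
        rw [hfix]; exact hn
      haveI : Fintype (G ⧸ N) := Fintype.ofFinite _
      have hcardN : Nat.card N = p := by rw [hNdef, Nat.card_zpowers, hord]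
      have hcardQ : Fintype.card (G ⧸ N) = p ^ r := by
        have hmul := Subgroup.card_eq_card_quotient_mul_card_subgroup N
        rw [hcardN, Nat.card_eq_fintype_card, Nat.card_eq_fintype_card, hG, pow_succ] at hmul
        exact (Nat.eq_of_mul_eq_mul_right hp.pos hmul.symm)
      set φ : MonoidAlgebra R G →ₐ[R] MonoidAlgebra R (G ⧸ N) :=
        MonoidAlgebra.mapDomainAlgHom R R (QuotientGroup.mk' N) with hφdef
      have haug : (MonoidAlgebra.lift R R (G ⧸ N) 1) (φ x) = 0 := by
        have hcomp : (MonoidAlgebra.lift R R (G ⧸ N) 1).comp φ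
            = MonoidAlgebra.lift R R G 1 := by
          apply MonoidAlgebra.algHom_ext
          intro g
          simp [hφdef, MonoidAlgebra.lift_single]
          exact Subsingleton.elim _ _
        have := congrArg (fun ψ : MonoidAlgebra R G →ₐ[R] R => ψ x) hcomp
        simpa using this.trans hx
      have hIH := ih (G ⧸ N) hcardQ (φ x) haug
      have hφpow : φ (x ^ p ^ r) ∈ Ideal.span {((p : ℕ) : MonoidAlgebra R (G ⧸ N))} := by
        rw [map_pow]; exact hIH
      obtain ⟨v, hv⟩ := Submodule.mem_span_singleton.mp hφpow
      set w : MonoidAlgebra R G :=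
        MonoidAlgebra.mapDomain (fun q : G ⧸ N => q.out) v with hwdef
      have hφw : φ w = v := by
        apply MonoidAlgebra.coeff_injective
        change Finsupp.mapDomain (⇑(QuotientGroup.mk' N))
          (Finsupp.mapDomain (fun q : G ⧸ N => q.out) v.coeff) = v.coeff
        rw [← Finsupp.mapDomain_comp]
        have hco : (⇑(QuotientGroup.mk' N)) ∘ (fun q : G ⧸ N => q.out) = id := by
          funext q
          exact QuotientGroup.out_eq' q
        rw [hco, Finsupp.mapDomain_id]
      set kk : MonoidAlgebra R G := x ^ p ^ r - w * ((p : ℕ) : MonoidAlgebra R G) with hkdef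
      have hφk : φ kk = 0 := by
        rw [hkdef, map_sub, map_mul, hφw, map_natCast]
        rw [smul_eq_mul] at hv
        rw [hv, sub_self]
      have hkmem : kk ∈ Ideal.span {MonoidAlgebra.single z (1 : R) - 1} := by
        apply ker_mapDomain_le_span z kk
        have : MonoidAlgebra.mapDomain (⇑(QuotientGroup.mk' N)) kk = 0 := hφk
        rwa [QuotientGroup.coe_mk'] at this
      obtain ⟨u, hu⟩ := Submodule.mem_span_singleton.mp hkmem
      rw [smul_eq_mul] at hu
      -- Now x ^ p ^ (r+1) = (w * p + kk) ^ p
      set J := Ideal.span {((p : ℕ) : MonoidAlgebra R G)} with hJdef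
      have hJmul : ∀ q ∈ J, ∀ c, q * c ∈ J := by
        intro q hq c
        refine span_central_mul_right ?_ hq c
        intro s hs t
        rw [Set.mem_singleton_iff] at hs
        subst hs
        exact (Nat.cast_commute p t).eq
      have hwp : w * ((p : ℕ) : MonoidAlgebra R G) ∈ J :=
        Submodule.mem_span_singleton.mpr ⟨w, by rw [smul_eq_mul]⟩
      have hcross := pow_sub_pow_mem J hJmul (w := kk) hwp p
      have hkp : kk ^ p ∈ J := by
        have hukp : kk ^ p = u ^ p * (MonoidAlgebra.single z (1 : R) - 1) ^ p := by
          rw [← hu]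
          exact Commute.mul_pow
            (((single_central_commute hzcen u).symm).sub_right (Commute.one_right u)) p
        rw [hukp]
        exact Ideal.mul_mem_left _ _ (sub_one_pow_prime_mem hp hord)
      have hxeq : x ^ p ^ (r + 1)
          = (w * ((p : ℕ) : MonoidAlgebra R G) + kk) ^ p := by
        rw [hkdef, add_sub_cancel, pow_succ, pow_mul]
      rw [hxeq]
      have := add_mem hcross hkp
      simpa using this

end Main

/-- Let `R` be a commutative ring, `a ⊆ R` an ideal, `p` a prime, and `G` a finite `p`-group
of order `p ^ r`.  Let `I_G` be the augmentation ideal of the group algebra `R[G]`, the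
kernel of the `R`-algebra map `R[G] → R` sending every `g ∈ G` to `1`.  If
`x ∈ a·R[G] + I_G`, then `x ^ (p ^ r)` lies in the (two-sided) ideal of `R[G]` generated by
`p` and `a`. -/
theorem pow_card_mem_span_p_sup (p r : ℕ) (hp : p.Prime)
    (G : Type*) [Group G] [Fintype G] (hG : Fintype.card G = p ^ r)
    (R : Type*) [CommRing R] (a : Ideal R)
    (x : MonoidAlgebra R G)
    (hx : x ∈ Ideal.map (algebraMap R (MonoidAlgebra R G)) a ⊔
      RingHom.ker
        ((MonoidAlgebra.lift R R G 1 : MonoidAlgebra R G →ₐ[R] R) : MonoidAlgebra R G →+* R)) :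
    x ^ (p ^ r) ∈ Ideal.span
      (insert ((p : ℕ) : MonoidAlgebra R G) ((algebraMap R (MonoidAlgebra R G)) '' (a : Set R))) := by
  classical
  set S : Set (MonoidAlgebra R G) :=
    insert ((p : ℕ) : MonoidAlgebra R G) ((algebraMap R (MonoidAlgebra R G)) '' (a : Set R))
    with hS
  set J : Ideal (MonoidAlgebra R G) := Ideal.span S with hJ
  have hcentral : ∀ s ∈ S, ∀ t : MonoidAlgebra R G, s * t = t * s := by
    intro s hs t
    rw [hS, Set.mem_insert_iff] at hs
    rcases hs with rfl | ⟨q, _, rfl⟩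
    · exact (Nat.cast_commute p t).eq
    · exact Algebra.commutes q t
  have hJmul : ∀ q ∈ J, ∀ c, q * c ∈ J := fun q hq c => span_central_mul_right hcentral hq c
  obtain ⟨y, hy, zz, hz, rfl⟩ := Submodule.mem_sup.mp hx
  have hyJ : y ∈ J := by
    have hle : Ideal.map (algebraMap R (MonoidAlgebra R G)) a ≤ J := by
      rw [Ideal.map_le_iff_le_comap]
      intro q hq
      exact Ideal.subset_span (Set.mem_insert_of_mem _ ⟨q, hq, rfl⟩)
    exact hle hy
  have hcross := pow_sub_pow_mem J hJmul (w := zz) hyJ (p ^ r)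
  have hzz : zz ^ p ^ r ∈ J := by
    have h1 : zz ^ p ^ r ∈ Ideal.span {((p : ℕ) : MonoidAlgebra R G)} :=
      aug_pow p hp r G hG zz (RingHom.mem_ker.mp hz)
    have h2 : Ideal.span {((p : ℕ) : MonoidAlgebra R G)} ≤ J :=
      Ideal.span_mono (by simp [hS])
    exact h2 h1
  have hsum := add_mem hcross hzz
  simpa using hsum
end
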